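/- Let g : ℝ^d → [0,∞) be a product of log-concave functions, g(z) = ∏_{i=1}^d g_i(z_i) with each g_i : ℝ → [0,∞) log-concave. Then for all x, y, u, w ∈ ℝ^d, g(x - u)·g(y - w) ≤ g(x ∧ y - u ∧ w)·g(x ∨ y - u ∨ w), where ∧ and ∨ are componentwise minimum and maximum. -/

import Mathlib

lemma key_logconcave (f : ℝ → ℝ) (hnn : ∀ x, 0 ≤ f x)
    (hlc : ∀ a b : ℝ, ∀ t ∈ Set.Ioo (0:ℝ) 1,
      f a ^ (1 - t) * f b ^ t ≤ f ((1 - t) * a + t * b))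
    (a b c e : ℝ) (h1 : a ≤ c) (h2 : c ≤ b) (hsum : a + b = c + e) :
    f a * f b ≤ f c * f e := by
  rcases eq_or_lt_of_le h1 with h1' | h1'
  · have : e = b := by rw [← h1'] at hsum; linarith
    rw [← h1', this]
  rcases eq_or_lt_of_le h2 with h2' | h2'
  · have : e = a := by rw [h2'] at hsum; linarith
    rw [h2', this, mul_comm]
  have hab : a < b := h1'.trans h2'
  set t : ℝ := (c - a) / (b - a) with ht
  have hba : (0:ℝ) < b - a := by linarith
  have ht0 : 0 < t := div_pos (by linarith) hba
  have ht1 : t < 1 := (div_lt_one hba).2 (by linarith)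
  have htc : (1 - t) * a + t * b = c := by
    have : t * (b - a) = c - a := div_mul_cancel₀ _ (by linarith)
    nlinarith [this]
  have hte : (1 - (1 - t)) * a + (1 - t) * b = e := by
    have : t * (b - a) = c - a := div_mul_cancel₀ _ (by linarith)
    nlinarith [this]
  have H1 : f a ^ (1 - t) * f b ^ t ≤ f c := by
    rw [← htc]; exact hlc a b t ⟨ht0, ht1⟩
  have H2 : f a ^ (1 - (1 - t)) * f b ^ (1 - t) ≤ f e := by
    rw [← hte]; exact hlc a b (1 - t) ⟨by linarith, by linarith⟩
  have hprod : (f a ^ (1 - t) * f b ^ t) * (f a ^ (1 - (1 - t)) * f b ^ (1 - t))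
      = f a * f b := by
    rw [mul_mul_mul_comm, ← Real.rpow_add' (hnn a) (by norm_num),
      ← Real.rpow_add' (hnn b) (by norm_num)]
    norm_num
  calc f a * f b = (f a ^ (1 - t) * f b ^ t) * (f a ^ (1 - (1 - t)) * f b ^ (1 - t)) :=
        hprod.symm
    _ ≤ f c * f e := by
        apply mul_le_mul H1 H2 (mul_nonneg (Real.rpow_nonneg (hnn a) _)
          (Real.rpow_nonneg (hnn b) _)) (hnn c)

lemma key2_logconcave (f : ℝ → ℝ) (hnn : ∀ x, 0 ≤ f x)
    (hlc : ∀ a b : ℝ, ∀ t ∈ Set.Ioo (0:ℝ) 1,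
      f a ^ (1 - t) * f b ^ t ≤ f ((1 - t) * a + t * b))
    (a b p q : ℝ) :
    f (a - p) * f (b - q) ≤ f (min a b - min p q) * f (max a b - max p q) := by
  rcases le_total a b with hab | hab <;> rcases le_total p q with hpq | hpq
  · rw [min_eq_left hab, min_eq_left hpq, max_eq_right hab, max_eq_right hpq]
  · rw [min_eq_left hab, min_eq_right hpq, max_eq_right hab, max_eq_left hpq]
    exact key_logconcave f hnn hlc _ _ _ _ (by linarith) (by linarith) (by ring)
  · rw [min_eq_right hab, min_eq_left hpq, max_eq_left hab, max_eq_right hpq,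
      mul_comm (f (a - p))]
    exact key_logconcave f hnn hlc _ _ _ _ (by linarith) (by linarith) (by ring)
  · rw [min_eq_right hab, min_eq_right hpq, max_eq_left hab, max_eq_left hpq,
      mul_comm]

theorem logConcave_product_condition (d : ℕ) (g : (Fin d → ℝ) → ℝ)
    (gi : Fin d → ℝ → ℝ) (hnn : ∀ i x, 0 ≤ gi i x)
    (hlc : ∀ i, ∀ a b : ℝ, ∀ t ∈ Set.Ioo (0:ℝ) 1,
      gi i a ^ (1 - t) * gi i b ^ t ≤ gi i ((1 - t) * a + t * b))
    (hg : ∀ z, g z = ∏ i, gi i (z i))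
    (x y u w : Fin d → ℝ) :
    g (x - u) * g (y - w) ≤ g (x ⊓ y - u ⊓ w) * g (x ⊔ y - u ⊔ w) := by
  rw [hg, hg, hg, hg, ← Finset.prod_mul_distrib, ← Finset.prod_mul_distrib]
  apply Finset.prod_le_prod
  · intro i _; exact mul_nonneg (hnn _ _) (hnn _ _)
  · intro i _
    simp only [Pi.sub_apply, Pi.inf_apply, Pi.sup_apply]
    exact key2_logconcave (gi i) (hnn i) (hlc i) _ _ _ _
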